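/- arXiv:1311.2683 — 2 statements merged into one kernel-verified Lean document; each statement's English description precedes it below -/
import Mathlib

section
/- Let V be a locally finite variety in which every subdirectly irreducible algebra is finite of cardinality at most n for some fixed n. Then V is residually finite. Conversely (Quackenbush's argument), if a locally finite variety V contains an infinite subdirectly irreducible algebra, then V contains arbitrarily large finite subdirectly irreducible algebras; hence if V has only finitely many finite subdirectly irreducible algebras and is locally finite, every subdirectly irreducible member of V is finite and V has a finite residual bound. -/
/-- A purely functional first-order signature. -/
structure Signature where
  ops : Type
  arity : ops → ℕ

/-- An algebra for a signature: an interpretation of each operation symbol. -/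
structure UAlg (σ : Signature) (A : Type) where
  interp : ∀ o : σ.ops, (Fin (σ.arity o) → A) → A

/-- Terms in `n` variables over a signature. -/
inductive Term (σ : Signature) (n : ℕ) : Type
  | var : Fin n → Term σ n
  | op : (o : σ.ops) → (Fin (σ.arity o) → Term σ n) → Term σ n

/-- Evaluation of a term at a tuple. -/
def Term.eval {σ : Signature} {A : Type} (Alg : UAlg σ A) {n : ℕ} :
    Term σ n → (Fin n → A) → A
  | .var i, v => v i
  | .op o ts, v => Alg.interp o fun j => (ts j).eval Alg v

/-- A congruence: an equivalence relation compatible with all operations. -/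
def IsCongruence {σ : Signature} {A : Type} (Alg : UAlg σ A) (r : A → A → Prop) : Prop :=
  Equivalence r ∧ ∀ (o : σ.ops) (x y : Fin (σ.arity o) → A),
    (∀ i, r (x i) (y i)) → r (Alg.interp o x) (Alg.interp o y)

/-- A `k`-ary polynomial operation: a term operation with parameters. -/
def IsPolynomial {σ : Signature} {A : Type} (Alg : UAlg σ A) {k : ℕ}
    (f : (Fin k → A) → A) : Prop :=
  ∃ (n : ℕ) (t : Term σ (k + n)) (params : Fin n → A),
    ∀ x : Fin k → A, f x = t.eval Alg (Fin.append x params)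

/-- A unary polynomial operation. -/
def IsUnaryPolynomial {σ : Signature} {A : Type} (Alg : UAlg σ A) (f : A → A) : Prop :=
  IsPolynomial Alg (k := 1) fun x => f (x 0)

/-- The term condition TermCond(α, β; γ). -/
def TermCond {σ : Signature} {A : Type} (Alg : UAlg σ A) (α β γ : A → A → Prop) : Prop :=
  ∀ (n m : ℕ) (t : Term σ (n + m)) (a₁ a₂ : Fin n → A) (b₁ b₂ : Fin m → A),
    (∀ i, α (a₁ i) (a₂ i)) → (∀ i, β (b₁ i) (b₂ i)) →
    γ (t.eval Alg (Fin.append a₁ b₁)) (t.eval Alg (Fin.append a₁ b₂)) →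
    γ (t.eval Alg (Fin.append a₂ b₁)) (t.eval Alg (Fin.append a₂ b₂))

/-- β is strongly abelian over γ. -/
def StronglyAbelianOver {σ : Signature} {A : Type} (Alg : UAlg σ A)
    (β γ : A → A → Prop) : Prop :=
  ∀ (n m : ℕ) (t : Term σ (n + m)) (a₁ a₂ : Fin n → A) (b₁ b₂ b₃ : Fin m → A),
    (∀ i, β (a₁ i) (a₂ i)) → (∀ i, β (b₁ i) (b₂ i)) → (∀ i, β (b₂ i) (b₃ i)) →
    γ (t.eval Alg (Fin.append a₁ b₁)) (t.eval Alg (Fin.append a₂ b₂)) →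
    γ (t.eval Alg (Fin.append a₁ b₃)) (t.eval Alg (Fin.append a₂ b₃))

/-- The least congruence containing a binary relation. -/
def congClosure {σ : Signature} {A : Type} (Alg : UAlg σ A) (R : A → A → Prop) :
    A → A → Prop :=
  fun a b => ∀ r, IsCongruence Alg r → (∀ x y, R x y → r x y) → r a b

/-- A subset closed under the operations. -/
def IsSubalgebra {σ : Signature} {A : Type} (Alg : UAlg σ A) (s : Set A) : Prop :=
  ∀ (o : σ.ops) (x : Fin (σ.arity o) → A), (∀ j, x j ∈ s) → Alg.interp o x ∈ s

/-- The power algebra `A^I`. -/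
def UAlg.pow {σ : Signature} {A : Type} (Alg : UAlg σ A) (I : Type) :
    UAlg σ (I → A) :=
  ⟨fun o x i => Alg.interp o fun j => x j i⟩

/-- The product of a family of algebras. -/
def UAlg.pi {σ : Signature} {ι : Type} {A : ι → Type} (Alg : ∀ i, UAlg σ (A i)) :
    UAlg σ (∀ i, A i) :=
  ⟨fun o x i => (Alg i).interp o fun j => x j i⟩

/-- The binary product of two algebras. -/
def UAlg.prod2 {σ : Signature} {A B : Type} (AlgA : UAlg σ A) (AlgB : UAlg σ B) :
    UAlg σ (A × B) :=
  ⟨fun o x => (AlgA.interp o fun j => (x j).1, AlgB.interp o fun j => (x j).2)⟩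

/-- The algebra structure on a subalgebra. -/
def UAlg.sub {σ : Signature} {A : Type} (Alg : UAlg σ A) (s : Set A)
    (hs : IsSubalgebra Alg s) : UAlg σ s :=
  ⟨fun o x => ⟨Alg.interp o fun j => (x j : A), hs o _ fun j => (x j).2⟩⟩

/-- Homomorphisms of algebras. -/
def IsHom {σ : Signature} {A B : Type} (AlgA : UAlg σ A) (AlgB : UAlg σ B)
    (f : A → B) : Prop :=
  ∀ (o : σ.ops) (x : Fin (σ.arity o) → A), f (AlgA.interp o x) = AlgB.interp o (f ∘ x)

/-- An idempotent unary polynomial. -/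
def IsIdempotentPoly {σ : Signature} {A : Type} (Alg : UAlg σ A) (e : A → A) : Prop :=
  IsUnaryPolynomial Alg e ∧ ∀ x, e (e x) = e x

/-- A (⊥, δ)-minimal set. -/
def IsMinimalSet {σ : Signature} {A : Type} (Alg : UAlg σ A) (δ : A → A → Prop)
    (U : Set A) : Prop :=
  (∃ e, IsIdempotentPoly Alg e ∧ U = Set.range e ∧ ∃ a b, δ a b ∧ e a ≠ e b) ∧
  ∀ e', IsIdempotentPoly Alg e' → Set.range e' ⊆ U → (∃ a b, δ a b ∧ e' a ≠ e' b) →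
    Set.range e' = U

/-- μ is an atom of the congruence lattice. -/
def IsAtomCong {σ : Signature} {A : Type} (Alg : UAlg σ A) (μ : A → A → Prop) : Prop :=
  IsCongruence Alg μ ∧ μ ≠ (fun a b => a = b) ∧
  ∀ θ, IsCongruence Alg θ → (∀ a b, θ a b → μ a b) → θ = (fun a b => a = b) ∨ θ = μ

/-- A (⊥, μ)-trace in a minimal set U. -/
def IsTrace {A : Type} (μ : A → A → Prop) (U N : Set A) : Prop :=
  (∃ a ∈ U, N = {x ∈ U | μ x a}) ∧ ∃ x ∈ N, ∃ y ∈ N, x ≠ y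

/-- The body of a minimal set: the union of its traces. -/
def Body {A : Type} (μ : A → A → Prop) (U : Set A) : Set A :=
  {x | ∃ N, IsTrace μ U N ∧ x ∈ N}

/-- Polynomial permutations of U (as functions A → A which are bijective on U). -/
def PolPermFun {σ : Signature} {A : Type} (Alg : UAlg σ A) (U : Set A) : Set (A → A) :=
  { p | IsUnaryPolynomial Alg p ∧ Set.BijOn p U U }

/-- Subdirect irreducibility: there is a pair contained in every nontrivial congruence. -/
def IsSI {σ : Signature} {B : Type} (Alg : UAlg σ B) : Prop :=
  ∃ a b : B, a ≠ b ∧ ∀ θ, IsCongruence Alg θ → θ ≠ (fun x y => x = y) → θ a b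

/-- The subalgebra generated by a set. -/
def genSub {σ : Signature} {B : Type} (Alg : UAlg σ B) (s : Set B) : Set B :=
  ⋂₀ {t | IsSubalgebra Alg t ∧ s ⊆ t}

/-- A strongly solvable congruence: connected to ⊥ by strongly abelian covers. -/
def IsStronglySolvable {σ : Signature} {A : Type} (Alg : UAlg σ A)
    (s : A → A → Prop) : Prop :=
  ∃ (n : ℕ) (c : Fin (n + 1) → (A → A → Prop)),
    c 0 = (fun a b => a = b) ∧ c (Fin.last n) = s ∧
    (∀ i, IsCongruence Alg (c i)) ∧
    ∀ i : Fin n, (∀ a b, c i.castSucc a b → c i.succ a b) ∧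
      StronglyAbelianOver Alg (c i.succ) (c i.castSucc)

/-- The set of n-ary term operations of an algebra. -/
def TermFun {σ : Signature} {A : Type} (Alg : UAlg σ A) (n : ℕ) :
    Set ((Fin n → A) → A) :=
  { g | ∃ t : Term σ n, g = fun v => t.eval Alg v }
section Aux

variable {σ : Signature} {A : Type}

/-- The congruence generated by a relation, as an inductive closure. -/
inductive CgGen (Alg : UAlg σ A) (R : A → A → Prop) : A → A → Prop
  | base {u v} : R u v → CgGen Alg R u v
  | refl (u) : CgGen Alg R u u
  | symm {u v} : CgGen Alg R u v → CgGen Alg R v u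
  | trans {u v w} : CgGen Alg R u v → CgGen Alg R v w → CgGen Alg R u w
  | compat (o : σ.ops) (u v : Fin (σ.arity o) → A) :
      (∀ i, CgGen Alg R (u i) (v i)) → CgGen Alg R (Alg.interp o u) (Alg.interp o v)

lemma cgGen_isCong (Alg : UAlg σ A) (R : A → A → Prop) :
    IsCongruence Alg (CgGen Alg R) :=
  ⟨⟨.refl, .symm, .trans⟩, fun o x y h => .compat o x y h⟩

lemma cgGen_le {Alg : UAlg σ A} {R r : A → A → Prop} (hr : IsCongruence Alg r)
    (hR : ∀ x y, R x y → r x y) : ∀ {a b}, CgGen Alg R a b → r a b := by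
  intro a b h
  induction h with
  | base h => exact hR _ _ h
  | refl u => exact hr.1.refl u
  | symm _ ih => exact hr.1.symm ih
  | trans _ _ ih1 ih2 => exact hr.1.trans ih1 ih2
  | compat o u v _ ih => exact hr.2 o u v ih

lemma cgGen_localize {Alg : UAlg σ A} {x y a b : A}
    (h : CgGen Alg (fun u v => u = x ∧ v = y) a b) :
    ∃ F : Set A, F.Finite ∧ a ∈ F ∧ b ∈ F ∧
      ∀ (S : Set A) (hs : IsSubalgebra Alg S), F ⊆ S → x ∈ S → y ∈ S →
        ∀ θ : S → S → Prop, IsCongruence (Alg.sub S hs) θ →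
          (∀ (hx : x ∈ S) (hy : y ∈ S), θ ⟨x, hx⟩ ⟨y, hy⟩) →
          ∀ (ha : a ∈ S) (hb : b ∈ S), θ ⟨a, ha⟩ ⟨b, hb⟩ := by
  induction h with
  | @base u v h =>
      refine ⟨{u, v}, (Set.finite_singleton v).insert u, Or.inl rfl, Or.inr rfl,
        fun S hs hF hx hy θ hθ hxy ha hb => ?_⟩
      obtain ⟨rfl, rfl⟩ := h
      exact hxy ha hb
  | refl u =>
      exact ⟨{u}, Set.finite_singleton _, rfl, rfl,
        fun S hs hF hx hy θ hθ hxy ha hb => hθ.1.refl _⟩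
  | @symm u v _ ih =>
      obtain ⟨F, hFfin, hu, hv, hP⟩ := ih
      exact ⟨F, hFfin, hv, hu,
        fun S hs hF hx hy θ hθ hxy ha hb =>
          hθ.1.symm (hP S hs hF hx hy θ hθ hxy hb ha)⟩
  | @trans u v w _ _ ih1 ih2 =>
      obtain ⟨F1, h1fin, hu1, hv1, hP1⟩ := ih1
      obtain ⟨F2, h2fin, hv2, hw2, hP2⟩ := ih2
      refine ⟨F1 ∪ F2, h1fin.union h2fin, Or.inl hu1, Or.inr hw2,
        fun S hs hF hx hy θ hθ hxy ha hb => ?_⟩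
      have hvS : v ∈ S := hF (Or.inl hv1)
      exact hθ.1.trans
        (hP1 S hs (fun z hz => hF (Or.inl hz)) hx hy θ hθ hxy ha hvS)
        (hP2 S hs (fun z hz => hF (Or.inr hz)) hx hy θ hθ hxy hvS hb)
  | compat o u v huv ih =>
      choose F hFfin hu hv hP using ih
      refine ⟨(⋃ i, F i) ∪ {Alg.interp o u, Alg.interp o v},
        (Set.finite_iUnion hFfin).union
          ((Set.finite_singleton _).insert _),
        Or.inr (Or.inl rfl), Or.inr (Or.inr rfl),
        fun S hs hF hx hy θ hθ hxy ha hb => ?_⟩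
      have hiS : ∀ i, u i ∈ S := fun i =>
        hF (Or.inl (Set.mem_iUnion.2 ⟨i, hu i⟩))
      have hiS' : ∀ i, v i ∈ S := fun i =>
        hF (Or.inl (Set.mem_iUnion.2 ⟨i, hv i⟩))
      have := hθ.2 o (fun i => ⟨u i, hiS i⟩) (fun i => ⟨v i, hiS' i⟩)
        (fun i => hP i S hs (fun z hz => hF (Or.inl (Set.mem_iUnion.2 ⟨i, hz⟩)))
          hx hy θ hθ hxy (hiS i) (hiS' i))
      exact this

lemma genSub_isSub (Alg : UAlg σ A) (s : Set A) : IsSubalgebra Alg (genSub Alg s) := by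
  intro o x hx t ht
  exact ht.1 o x fun j => hx j t ht

lemma subset_genSub (Alg : UAlg σ A) (s : Set A) : s ⊆ genSub Alg s :=
  fun z hz t ht => ht.2 hz

/-- Upper bound of finitely many members of a chain of sets. -/
lemma chain_fin_ub {α : Type*} {c : Set (Set α)} (hc : IsChain (· ⊆ ·) c)
    (hne : c.Nonempty) {n : ℕ} (f : Fin n → Set α) (hf : ∀ i, f i ∈ c) :
    ∃ t ∈ c, ∀ i, f i ⊆ t := by
  rcases isEmpty_or_nonempty (Fin n) with hz | hz
  · exact ⟨hne.choose, hne.choose_spec, fun i => (hz.false i).elim⟩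
  · have hfin : (Set.range f).Finite := Set.finite_range f
    obtain ⟨t, ⟨i0, hi0⟩, hmax⟩ :=
      hfin.exists_maximalFor id _ (Set.range_nonempty f)
    refine ⟨t, hi0 ▸ hf i0, fun i => ?_⟩
    rcases eq_or_ne (f i) t with h | h
    · exact h.le
    · rcases hc.total (hi0 ▸ hf i0 : t ∈ c) (hf i) with h1 | h1
      · exact hmax ⟨i, rfl⟩ h1
      · exact h1

/-- Existence of a maximal congruence avoiding a given pair (Zorn). -/
lemma exists_maxCong (Alg : UAlg σ A) (a b : A) (hab : a ≠ b) :
    ∃ θ : A → A → Prop, IsCongruence Alg θ ∧ ¬ θ a b ∧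
      ∀ θ' : A → A → Prop, IsCongruence Alg θ' → (∀ x y, θ x y → θ' x y) →
        ¬ θ' a b → ∀ x y, θ' x y → θ x y := by
  set S : Set (Set (A × A)) :=
    {c | IsCongruence Alg (fun x y => (x, y) ∈ c) ∧ (a, b) ∉ c} with hS
  have hdiag : {p : A × A | p.1 = p.2} ∈ S := by
    refine ⟨⟨⟨fun x => rfl, fun h => h.symm, fun h1 h2 => h1.trans h2⟩,
      fun o x y h => ?_⟩, hab⟩
    have : x = y := funext h
    simp [this]
  have hzorn : ∀ c ⊆ S, IsChain (· ⊆ ·) c → c.Nonempty →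
      ∃ ub ∈ S, ∀ s ∈ c, s ⊆ ub := by
    intro c hcS hchain hcne
    refine ⟨⋃₀ c, ⟨⟨⟨?_, ?_, ?_⟩, ?_⟩, ?_⟩, fun s hs => Set.subset_sUnion_of_mem hs⟩
    · intro x
      obtain ⟨t, ht⟩ := hcne
      exact ⟨t, ht, ((hcS ht).1).1.refl x⟩
    · rintro x y ⟨t, ht, hxy⟩
      exact ⟨t, ht, ((hcS ht).1).1.symm hxy⟩
    · rintro x y z ⟨t1, ht1, h1⟩ ⟨t2, ht2, h2⟩
      rcases hchain.total ht1 ht2 with h | h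
      · exact ⟨t2, ht2, ((hcS ht2).1).1.trans (h h1) h2⟩
      · exact ⟨t1, ht1, ((hcS ht1).1).1.trans h1 (h h2)⟩
    · intro o x y h
      have : ∀ i, ∃ t, t ∈ c ∧ (x i, y i) ∈ t := fun i => h i
      choose f hf1 hf2 using this
      obtain ⟨t, htc, hft⟩ := chain_fin_ub hchain hcne f hf1
      exact ⟨t, htc, ((hcS htc).1).2 o x y fun i => hft i (hf2 i)⟩
    · intro hmem
      obtain ⟨t, htc, habt⟩ := hmem
      exact (hcS htc).2 habt
  obtain ⟨m, hdm, hmS, hmax⟩ := zorn_subset_nonempty S hzorn _ hdiag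
  refine ⟨fun x y => (x, y) ∈ m, hmS.1, hmS.2, ?_⟩
  intro θ' hθ' hle hnab x y hxy
  have hsub : m ⊆ {p : A × A | θ' p.1 p.2} := fun p hp => hle p.1 p.2 hp
  have := hmax (y := {p : A × A | θ' p.1 p.2}) ⟨hθ', hnab⟩ hsub
  exact this hxy

/-- Core lemma: every pair a ≠ b is separated by a surjection onto an SI quotient. -/
lemma core_quot (Alg : UAlg σ A) (a b : A) (hab : a ≠ b) :
    ∃ (C : Type) (AlgC : UAlg σ C) (f : A → C),
      IsHom Alg AlgC f ∧ Function.Surjective f ∧ f a ≠ f b ∧ IsSI AlgC ∧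
      (Finite A → Finite C) ∧
      (∀ x y : A, (∀ r, IsCongruence Alg r → r x y → r a b) → f x ≠ f y) := by
  obtain ⟨θ, hθ, hθab, hθmax⟩ := exists_maxCong Alg a b hab
  letI st : Setoid A := ⟨θ, hθ.1⟩
  let C := Quotient st
  let f : A → C := fun x => Quotient.mk st x
  have hfeq : ∀ x y : A, f x = f y ↔ θ x y := by
    intro x y
    constructor
    · exact fun h => Quotient.exact h
    · exact fun h => Quotient.sound h
  let AlgC : UAlg σ C := ⟨fun o x => f (Alg.interp o fun j => (x j).out)⟩
  have hout : ∀ q : C, f q.out = q := fun q => Quotient.out_eq q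
  have hhom : IsHom Alg AlgC f := by
    intro o x
    show f _ = f _
    rw [hfeq]
    refine hθ.2 o _ _ fun i => ?_
    have : f ((f (x i)).out) = f (x i) := hout _
    exact hθ.1.symm ((hfeq _ _).1 this)
  have hsurj : Function.Surjective f := fun q => ⟨q.out, hout q⟩
  have hfab : f a ≠ f b := fun h => hθab ((hfeq _ _).1 h)
  refine ⟨C, AlgC, f, hhom, hsurj, hfab, ?_, ?_, ?_⟩
  · -- SI
    refine ⟨f a, f b, hfab, ?_⟩
    intro ψ hψ hψne
    let φ : A → A → Prop := fun x y => ψ (f x) (f y)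
    have hφ : IsCongruence Alg φ := by
      refine ⟨⟨fun x => hψ.1.refl _, fun h => hψ.1.symm h,
        fun h1 h2 => hψ.1.trans h1 h2⟩, ?_⟩
      intro o x y h
      show ψ (f (Alg.interp o x)) (f (Alg.interp o y))
      rw [hhom o x, hhom o y]
      exact hψ.2 o (f ∘ x) (f ∘ y) h
    by_contra hψab
    have hφab : ¬ φ a b := hψab
    have hle : ∀ x y, θ x y → φ x y := by
      intro x y h
      have hfx : f x = f y := (hfeq _ _).2 h
      show ψ (f x) (f y)
      rw [hfx]; exact hψ.1.refl _
    have hφθ : ∀ x y, φ x y → θ x y := hθmax φ hφ hle hφab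
    apply hψne
    funext u v
    ext
    constructor
    · intro h
      have h1 : ψ (f u.out) (f v.out) := by rw [hout u, hout v]; exact h
      have h2 : θ u.out v.out := hφθ _ _ h1
      have := (hfeq _ _).2 h2
      rw [hout u, hout v] at this
      exact this
    · intro h; rw [h]; exact hψ.1.refl _
  · intro hfin
    exact Quotient.finite st
  · intro x y hcg hfxy
    exact hθab (hcg θ hθ ((hfeq _ _).1 hfxy))

end Aux


/-- For a locally finite variety V (a class of algebras closed under H, S
and P): (1) if every SI member is finite of size ≤ n then V is residually finite;
(2) if V has an infinite SI member then it has arbitrarily large finite SI members;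
(3) hence if the finite SI members of V have bounded size, every SI member of V is
finite and V has a finite residual bound. -/
theorem stmt_17 {σ : Signature}
    (V : (B : Type) → UAlg σ B → Prop)
    (hH : ∀ (B : Type) (AlgB : UAlg σ B) (C : Type) (AlgC : UAlg σ C) (f : B → C),
      V B AlgB → IsHom AlgB AlgC f → Function.Surjective f → V C AlgC)
    (hS : ∀ (B : Type) (AlgB : UAlg σ B) (t : Set B) (ht : IsSubalgebra AlgB t),
      V B AlgB → V t (UAlg.sub AlgB t ht))
    (hP : ∀ (I : Type) (B : I → Type) (AlgB : ∀ i, UAlg σ (B i)),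
      (∀ i, V (B i) (AlgB i)) → V (∀ i, B i) (UAlg.pi AlgB))
    (hLF : ∀ (B : Type) (AlgB : UAlg σ B), V B AlgB →
      ∀ t : Set B, t.Finite → (genSub AlgB t).Finite) :
    -- (1) a finite bound on SIs gives residual finiteness:
    (∀ n : ℕ,
      (∀ (B : Type) (AlgB : UAlg σ B), V B AlgB → IsSI AlgB →
        Finite B ∧ Nat.card B ≤ n) →
      ∀ (B : Type) (AlgB : UAlg σ B), V B AlgB → ∀ a b : B, a ≠ b →
        ∃ (C : Type) (AlgC : UAlg σ C) (f : B → C), Finite C ∧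
          IsHom AlgB AlgC f ∧ Function.Surjective f ∧ f a ≠ f b) ∧
    -- (2) an infinite SI yields arbitrarily large finite SIs:
    ((∃ (B : Type) (AlgB : UAlg σ B), V B AlgB ∧ IsSI AlgB ∧ Infinite B) →
      ∀ m : ℕ, ∃ (B : Type) (AlgB : UAlg σ B), V B AlgB ∧ IsSI AlgB ∧ Finite B ∧
        m ≤ Nat.card B) ∧
    -- (3) boundedness of the finite SIs gives: all SIs finite, and a finite residual bound:
    ((∃ n : ℕ, ∀ (B : Type) (AlgB : UAlg σ B), V B AlgB → IsSI AlgB → Finite B →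
        Nat.card B ≤ n) →
      (∀ (B : Type) (AlgB : UAlg σ B), V B AlgB → IsSI AlgB → Finite B) ∧
      ∃ n : ℕ, ∀ (B : Type) (AlgB : UAlg σ B), V B AlgB → ∀ a b : B, a ≠ b →
        ∃ (C : Type) (AlgC : UAlg σ C) (f : B → C), Finite C ∧ Nat.card C ≤ n ∧
          IsHom AlgB AlgC f ∧ Function.Surjective f ∧ f a ≠ f b) := by
  have part2 : (∃ (B : Type) (AlgB : UAlg σ B), V B AlgB ∧ IsSI AlgB ∧ Infinite B) →
      ∀ m : ℕ, ∃ (B : Type) (AlgB : UAlg σ B), V B AlgB ∧ IsSI AlgB ∧ Finite B ∧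
        m ≤ Nat.card B := by
    rintro ⟨B, AlgB, hVB, ⟨a, b, hab, hmono⟩, hinf⟩ m
    let c : Fin m → B := fun i => Infinite.natEmbedding B i.val
    have hc : Function.Injective c := fun i j h =>
      Fin.ext ((Infinite.natEmbedding B).injective h)
    have hCg : ∀ i j : Fin m, i ≠ j →
        CgGen AlgB (fun u v => u = c i ∧ v = c j) a b := by
      intro i j hij
      refine hmono _ (cgGen_isCong _ _) ?_
      intro h
      have hb : CgGen AlgB (fun u v => u = c i ∧ v = c j) (c i) (c j) :=
        .base ⟨rfl, rfl⟩
      rw [h] at hb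
      exact hij (hc hb)
    have hloc := fun (i j : Fin m) (hij : i ≠ j) => cgGen_localize (hCg i j hij)
    choose F hFfin hFa hFb hFP using hloc
    let F' : Fin m → Fin m → Set B := fun i j => if h : i ≠ j then F i j h else ∅
    have hF'fin : ∀ i j, (F' i j).Finite := by
      intro i j
      by_cases h : i ≠ j
      · simpa [F', h] using hFfin i j h
      · push_neg at h
        subst h
        simp [F']
    let G : Set B := insert a (insert b (Set.range c ∪ ⋃ i, ⋃ j, F' i j))
    have hGfin : G.Finite := by
      refine Set.Finite.insert _ (Set.Finite.insert _ (Set.Finite.union ?_ ?_))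
      · exact Set.finite_range c
      · exact Set.finite_iUnion fun i => Set.finite_iUnion fun j => hF'fin i j
    let St : Set B := genSub AlgB G
    have hsub : IsSubalgebra AlgB St := genSub_isSub AlgB G
    have hGS : G ⊆ St := subset_genSub AlgB G
    have hStfin : St.Finite := hLF B AlgB hVB G hGfin
    haveI : Finite ↥St := hStfin.to_subtype
    have haS : a ∈ St := hGS (Set.mem_insert _ _)
    have hbS : b ∈ St := hGS (Set.mem_insert_of_mem _ (Set.mem_insert _ _))
    have hcS : ∀ i, c i ∈ St := fun i =>
      hGS (Set.mem_insert_of_mem _ (Set.mem_insert_of_mem _ (Or.inl ⟨i, rfl⟩)))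
    have hFS : ∀ (i j : Fin m) (hij : i ≠ j), F i j hij ⊆ St := by
      intro i j hij z hz
      refine hGS (Set.mem_insert_of_mem _ (Set.mem_insert_of_mem _ (Or.inr ?_)))
      refine Set.mem_iUnion.2 ⟨i, Set.mem_iUnion.2 ⟨j, ?_⟩⟩
      simp only [F', dif_pos hij]
      exact hz
    let AlgS := AlgB.sub St hsub
    have hVS : V ↥St AlgS := hS B AlgB St hsub hVB
    have habS : (⟨a, haS⟩ : ↥St) ≠ ⟨b, hbS⟩ := fun h =>
      hab (congrArg Subtype.val h)
    obtain ⟨C, AlgC, f, hhom, hsurj, hfab, hSIC, hfin, hsep⟩ :=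
      core_quot AlgS ⟨a, haS⟩ ⟨b, hbS⟩ habS
    have hVC : V C AlgC := hH ↥St AlgS C AlgC f hVS hhom hsurj
    have hfinC : Finite C := hfin inferInstance
    let g : Fin m → C := fun i => f ⟨c i, hcS i⟩
    have hginj : Function.Injective g := by
      intro i j hgij
      by_contra hij
      refine hsep ⟨c i, hcS i⟩ ⟨c j, hcS j⟩ ?_ hgij
      intro r hr hrxy
      exact hFP i j hij St hsub (hFS i j hij) (hcS i) (hcS j) r hr
        (fun hx hy => hrxy) haS hbS
    have : m ≤ Nat.card C := by
      have := Nat.card_le_card_of_injective g hginj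
      simpa using this
    exact ⟨C, AlgC, hVC, hSIC, hfinC, this⟩
  refine ⟨?_, part2, ?_⟩
  · intro n hbound B AlgB hVB a b hab
    obtain ⟨C, AlgC, f, hhom, hsurj, hfab, hSIC, hfin, hsep⟩ :=
      core_quot AlgB a b hab
    have hVC : V C AlgC := hH B AlgB C AlgC f hVB hhom hsurj
    exact ⟨C, AlgC, f, (hbound C AlgC hVC hSIC).1, hhom, hsurj, hfab⟩
  · rintro ⟨n, hn⟩
    have allfin : ∀ (B : Type) (AlgB : UAlg σ B), V B AlgB → IsSI AlgB → Finite B := by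
      intro B AlgB hVB hSI
      by_contra hinf
      haveI : Infinite B := not_finite_iff_infinite.mp hinf
      obtain ⟨C, AlgC, hVC, hSIC, hfinC, hle⟩ :=
        part2 ⟨B, AlgB, hVB, hSI, inferInstance⟩ (n + 1)
      have := hn C AlgC hVC hSIC hfinC
      omega
    refine ⟨allfin, n, ?_⟩
    intro B AlgB hVB a b hab
    obtain ⟨C, AlgC, f, hhom, hsurj, hfab, hSIC, hfin, hsep⟩ :=
      core_quot AlgB a b hab
    have hVC : V C AlgC := hH B AlgB C AlgC f hVB hhom hsurj
    have hfinC : Finite C := allfin C AlgC hVC hSIC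
    exact ⟨C, AlgC, f, hfinC, hn C AlgC hVC hSIC hfinC, hhom, hsurj, hfab⟩
end

section
/- Let A be a finite algebra with an atom δ of Con(A) of strongly abelian (unary) type, and let U be a (⊥, δ)-minimal set. Suppose D₁, …, D_k are δ-classes and f is a k-ary polynomial of A mapping D₁ × ⋯ × D_k into U. Then f, restricted to D₁ × ⋯ × D_k, depends on at most one of its variables. -/
/-! ### Auxiliary infrastructure for stmt_19 -/

section Aux

variable {σ : Signature} {A : Type}

/-- Renaming of variables in a term. -/
def Term.rename {n m : ℕ} (ρ : Fin n → Fin m) : Term σ n → Term σ m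
  | .var i => .var (ρ i)
  | .op o ts => .op o fun j => (ts j).rename ρ

theorem Term.eval_rename (Alg : UAlg σ A) {n m : ℕ} (ρ : Fin n → Fin m)
    (t : Term σ n) (v : Fin m → A) :
    (t.rename ρ).eval Alg v = t.eval Alg (v ∘ ρ) := by
  induction t with
  | var i => rfl
  | op o ts ih => simp only [Term.rename, Term.eval]; congr 1; funext j; exact ih j

/-- Substitution of terms for variables. -/
def Term.subst {n m : ℕ} (θ : Fin n → Term σ m) : Term σ n → Term σ m
  | .var i => θ i
  | .op o ts => .op o fun j => (ts j).subst θ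

theorem Term.eval_subst (Alg : UAlg σ A) {n m : ℕ} (θ : Fin n → Term σ m)
    (t : Term σ n) (v : Fin m → A) :
    (t.subst θ).eval Alg v = t.eval Alg (fun i => (θ i).eval Alg v) := by
  induction t with
  | var i => rfl
  | op o ts ih => simp only [Term.subst, Term.eval]; congr 1; funext j; exact ih j

theorem append_at {m n : ℕ} (u : Fin m → A) (v : Fin n → A) (idx : Fin (m + n)) :
    Fin.append u v idx =
      if h : idx.val < m then u ⟨idx.val, h⟩
      else v ⟨idx.val - m, by have := idx.isLt; omega⟩ := by
  by_cases h : idx.val < m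
  · rw [dif_pos h]
    conv_lhs => rw [show idx = Fin.castAdd n ⟨idx.val, h⟩ from Fin.ext rfl]
    rw [Fin.append_left]
  · rw [dif_neg h]
    conv_lhs =>
      rw [show idx = Fin.natAdd m ⟨idx.val - m, by have := idx.isLt; omega⟩ from
        Fin.ext (by simp; omega)]
    rw [Fin.append_right]

/-- Term evaluation preserves congruences. -/
theorem eval_cong (Alg : UAlg σ A) {δ : A → A → Prop} (hδ : IsCongruence Alg δ)
    {n : ℕ} (t : Term σ n) (v v' : Fin n → A) (h : ∀ l, δ (v l) (v' l)) :
    δ (t.eval Alg v) (t.eval Alg v') := by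
  induction t with
  | var i => exact h i
  | op o ts ih => exact hδ.2 o _ _ fun j => ih j

theorem append1_lt {n : ℕ} (x : Fin 1 → A) (c : Fin n → A) (idx : Fin (1 + n))
    (h : idx.val = 0) : Fin.append x c idx = x 0 := by
  rw [append_at, dif_pos (by omega)]
  exact congrArg x (Subsingleton.elim _ _)

theorem append1_ge {n : ℕ} (x : Fin 1 → A) (c : Fin n → A) (idx : Fin (1 + n))
    (j : Fin n) (h : idx.val = 1 + j.val) : Fin.append x c idx = c j := by
  rw [append_at, dif_neg (by omega)]
  congr 1
  exact Fin.ext (by simp [h])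

theorem appendk_lt {k n : ℕ} (g : Fin k → A) (c : Fin n → A) (idx : Fin (k + n))
    (j : Fin k) (h : idx.val = j.val) : Fin.append g c idx = g j := by
  rw [append_at, dif_pos (show idx.val < k by omega)]
  congr 1
  exact Fin.ext h

theorem appendk_ge {k n : ℕ} (g : Fin k → A) (c : Fin n → A) (idx : Fin (k + n))
    (j : Fin n) (h : idx.val = k + j.val) : Fin.append g c idx = c j := by
  rw [append_at, dif_neg (by omega)]
  congr 1
  exact Fin.ext (by simp [h])

/-- Variable re-indexing: put coordinate `i` first, all others become parameters. -/
def rho (k n : ℕ) (i : Fin k) : Fin (k + n) → Fin (1 + (k + n)) :=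
  fun l => if l.val = i.val then ⟨0, by omega⟩
           else ⟨1 + l.val, by have := l.isLt; omega⟩

theorem comp_rho {k n : ℕ} (i : Fin k) (x : Fin 1 → A) (g : Fin k → A) (c : Fin n → A) :
    (Fin.append x (Fin.append g c)) ∘ (rho k n i) =
      Fin.append (Function.update g i (x 0)) c := by
  funext l
  simp only [Function.comp_apply, rho]
  by_cases hl : l.val = i.val
  · rw [if_pos hl, append1_lt _ _ _ rfl, appendk_lt _ _ l i hl, Function.update_apply,
      if_pos rfl]
  · rw [if_neg hl, append1_ge _ _ _ ⟨l.val, l.isLt⟩ rfl]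
    rw [append_at, append_at]
    by_cases h2 : l.val < k
    · rw [dif_pos h2, dif_pos h2, Function.update_apply,
        if_neg (fun he => hl (by rw [show l.val = (⟨l.val, h2⟩ : Fin k).val from rfl, he]))]
    · rw [dif_neg h2, dif_neg h2]

section AlgFix

variable (Alg : UAlg σ A)

theorem unary_id : IsUnaryPolynomial Alg (fun x => x) := by
  refine ⟨0, .var ⟨0, by omega⟩, Fin.elim0, fun x => ?_⟩
  exact (append1_lt x Fin.elim0 ⟨0, by omega⟩ rfl).symm

theorem unary_of_poly_update {k : ℕ} {f : (Fin k → A) → A} (hf : IsPolynomial Alg f)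
    (g : Fin k → A) (j : Fin k) :
    IsUnaryPolynomial Alg (fun x => f (Function.update g j x)) := by
  obtain ⟨n, t, params, ht⟩ := hf
  refine ⟨k + n, t.rename (rho k n j), Fin.append g params, fun x => ?_⟩
  rw [Term.eval_rename, comp_rho, ← ht]

theorem poly_interp (o : σ.ops) : IsPolynomial Alg (fun v => Alg.interp o v) := by
  refine ⟨0, .op o (fun l => .var (Fin.castAdd 0 l)), Fin.elim0, fun x => ?_⟩
  simp [Term.eval, Fin.append_left]

theorem unary_op_update (o : σ.ops) (c : Fin (σ.arity o) → A) (j : Fin (σ.arity o)) :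
    IsUnaryPolynomial Alg (fun x => Alg.interp o (Function.update c j x)) :=
  unary_of_poly_update Alg (poly_interp Alg o) c j

theorem unary_comp {p q : A → A} (hp : IsUnaryPolynomial Alg p)
    (hq : IsUnaryPolynomial Alg q) : IsUnaryPolynomial Alg (fun x => p (q x)) := by
  obtain ⟨n₁, t₁, c₁, h₁⟩ := hp
  obtain ⟨n₂, t₂, c₂, h₂⟩ := hq
  refine ⟨n₂ + n₁, t₁.subst (fun l =>
      if h : l.val = 0 then t₂.rename (Fin.castLE (by omega))
      else .var ⟨1 + n₂ + (l.val - 1), by have := l.isLt; omega⟩),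
    Fin.append c₂ c₁, fun x => ?_⟩
  rw [Term.eval_subst]
  have hclaim : (fun l : Fin (1 + n₁) =>
      Term.eval Alg (if h : l.val = 0 then t₂.rename (Fin.castLE (by omega))
        else .var ⟨1 + n₂ + (l.val - 1), by have := l.isLt; omega⟩)
        (Fin.append x (Fin.append c₂ c₁)))
      = Fin.append (fun _ : Fin 1 => q (x 0)) c₁ := by
    funext l
    by_cases hl : l.val = 0
    · rw [dif_pos hl, Term.eval_rename, append1_lt _ _ _ hl]
      have henv : (Fin.append x (Fin.append c₂ c₁)) ∘ (Fin.castLE (by omega)) =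
          Fin.append x c₂ := by
        funext m
        simp only [Function.comp_apply]
        by_cases hm : m.val = 0
        · rw [append1_lt _ _ _ (by simpa using hm), append1_lt _ _ _ hm]
        · have hmlt := m.isLt
          rw [append1_ge _ _ _ ⟨m.val - 1, by omega⟩
              (by simp only [Fin.coe_castLE, Fin.val_mk]; omega),
            appendk_lt _ _ _ ⟨m.val - 1, by omega⟩ rfl,
            append1_ge _ _ _ ⟨m.val - 1, by omega⟩
              (by simp only [Fin.val_mk]; omega)]
      rw [henv, ← h₂]
    · have hllt := l.isLt
      rw [dif_neg hl]
      show Fin.append x (Fin.append c₂ c₁) _ = _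
      rw [append1_ge _ _ _ ⟨n₂ + (l.val - 1), by omega⟩
          (by simp only [Fin.val_mk]; omega),
        appendk_ge _ _ _ ⟨l.val - 1, by omega⟩ rfl,
        append1_ge _ _ l ⟨l.val - 1, by omega⟩ (by simp only [Fin.val_mk]; omega)]
  rw [hclaim, ← h₁ (fun _ => q (x 0))]

theorem unary_iterate {p : A → A} (hp : IsUnaryPolynomial Alg p) (n : ℕ) :
    IsUnaryPolynomial Alg (p^[n]) := by
  induction n with
  | zero => exact unary_id Alg
  | succ m ih =>
      have h2 := unary_comp Alg hp ih
      have he : p ∘ p^[m] = fun x => p (p^[m] x) := rfl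
      rw [Function.iterate_succ', he]
      exact h2

theorem unary_pres {δ : A → A → Prop} (hδ : IsCongruence Alg δ) {p : A → A}
    (hp : IsUnaryPolynomial Alg p) {a b : A} (h : δ a b) : δ (p a) (p b) := by
  obtain ⟨n, t, c, ht⟩ := hp
  have ha : p a = Term.eval Alg t (Fin.append (fun _ => a) c) := ht (fun _ => a)
  have hb : p b = Term.eval Alg t (Fin.append (fun _ => b) c) := ht (fun _ => b)
  rw [ha, hb]
  refine eval_cong Alg hδ t _ _ fun l => ?_
  rw [append_at, append_at]
  by_cases hl : l.val < 1
  · rw [dif_pos hl, dif_pos hl]; exact h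
  · rw [dif_neg hl, dif_neg hl]; exact hδ.1.refl _

theorem poly_pres {δ : A → A → Prop} (hδ : IsCongruence Alg δ) {k : ℕ}
    {f : (Fin k → A) → A} (hf : IsPolynomial Alg f) {x y : Fin k → A}
    (h : ∀ l, δ (x l) (y l)) : δ (f x) (f y) := by
  obtain ⟨n, t, c, ht⟩ := hf
  rw [ht x, ht y]
  refine eval_cong Alg hδ t _ _ fun l => ?_
  rw [append_at, append_at]
  by_cases hl : l.val < k
  · rw [dif_pos hl, dif_pos hl]; exact h _
  · rw [dif_neg hl, dif_neg hl]; exact hδ.1.refl _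

/-- The one-coordinate consequence of strong abelianness. -/
theorem Pone {δ : A → A → Prop} (hSA : StronglyAbelianOver Alg δ (fun a b => a = b))
    {k : ℕ} {f : (Fin k → A) → A} (hf : IsPolynomial Alg f) (i : Fin k) (a b : A)
    (hab : δ a b) (hδ : IsCongruence Alg δ) (u v w : Fin k → A)
    (huv : ∀ l, δ (u l) (v l)) (hvw : ∀ l, δ (v l) (w l))
    (h : f (Function.update u i a) = f (Function.update v i b)) :
    f (Function.update w i a) = f (Function.update w i b) := by
  obtain ⟨n, t, params, ht⟩ := hf
  have key := hSA 1 (k + n) (t.rename (rho k n i)) (fun _ => a) (fun _ => b)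
      (Fin.append u params) (Fin.append v params) (Fin.append w params)
      (fun _ => hab)
      (fun l => by
        rw [append_at, append_at]
        by_cases hl : l.val < k
        · rw [dif_pos hl, dif_pos hl]; exact huv _
        · rw [dif_neg hl, dif_neg hl]; exact hδ.1.refl _)
      (fun l => by
        rw [append_at, append_at]
        by_cases hl : l.val < k
        · rw [dif_pos hl, dif_pos hl]; exact hvw _
        · rw [dif_neg hl, dif_neg hl]; exact hδ.1.refl _)
      (by
        rw [Term.eval_rename, Term.eval_rename,
          comp_rho i (fun _ => a) u params, comp_rho i (fun _ => b) v params,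
          ← ht, ← ht]
        exact h)
  rw [Term.eval_rename, Term.eval_rename,
    comp_rho i (fun _ => a) w params, comp_rho i (fun _ => b) w params,
    ← ht, ← ht] at key
  exact key

/-- The generating relation for the congruence generated by the pair `(u₁, u₂)`:
polynomial images of the pair. -/
def MPair (u₁ u₂ : A) : A → A → Prop :=
  fun x y => ∃ s, IsUnaryPolynomial Alg s ∧
    ((s u₁ = x ∧ s u₂ = y) ∨ (s u₁ = y ∧ s u₂ = x))

theorem theta_cong (u₁ u₂ : A) : IsCongruence Alg (Relation.EqvGen (MPair Alg u₁ u₂)) := by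
  refine ⟨Relation.EqvGen.is_equivalence _, ?_⟩
  intro o x y hxy
  have step : ∀ (c : Fin (σ.arity o) → A) (l : Fin (σ.arity o)) (a b : A),
      Relation.EqvGen (MPair Alg u₁ u₂) a b →
      Relation.EqvGen (MPair Alg u₁ u₂)
        (Alg.interp o (Function.update c l a)) (Alg.interp o (Function.update c l b)) := by
    intro c l a b h
    induction h with
    | rel a b hab =>
        obtain ⟨s, hs, hcase⟩ := hab
        refine Relation.EqvGen.rel _ _ ⟨fun z => Alg.interp o (Function.update c l (s z)),
          unary_comp Alg (unary_op_update Alg o c l) hs, ?_⟩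
        rcases hcase with ⟨h1, h2⟩ | ⟨h1, h2⟩
        · exact Or.inl ⟨by simp only [h1], by simp only [h2]⟩
        · exact Or.inr ⟨by simp only [h1], by simp only [h2]⟩
    | refl a => exact .refl _
    | symm a b _ ih => exact .symm _ _ ih
    | trans a b c _ _ ih1 ih2 => exact .trans _ _ _ ih1 ih2
  have main : ∀ S : Finset (Fin (σ.arity o)), Relation.EqvGen (MPair Alg u₁ u₂)
      (Alg.interp o x) (Alg.interp o (fun l => if l ∈ S then y l else x l)) := by
    intro S
    induction S using Finset.induction_on with
    | empty =>
        have : (fun l => if l ∈ (∅ : Finset (Fin (σ.arity o))) then y l else x l) = x := by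
          funext m; simp
        rw [this]; exact .refl _
    | @insert l S hl ih =>
        have h1 : (fun m => if m ∈ insert l S then y m else x m)
            = Function.update (fun m => if m ∈ S then y m else x m) l (y l) := by
          funext m
          by_cases hm : m = l
          · subst hm; simp
          · simp [Function.update_apply, hm]
        have h2 : (fun m => if m ∈ S then y m else x m)
            = Function.update (fun m => if m ∈ S then y m else x m) l (x l) := by
          funext m
          by_cases hm : m = l
          · subst hm; simp [hl]
          · simp [Function.update_apply, hm]
        refine .trans _ _ _ ih ?_
        rw [h1]
        conv_lhs => rw [h2]
        exact step _ l _ _ (hxy l)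
  have hfin := main Finset.univ
  have hall : (fun l => if l ∈ (Finset.univ : Finset (Fin (σ.arity o))) then y l else x l)
      = y := by funext m; simp
  rwa [hall] at hfin

theorem malcev {δ : A → A → Prop} (hatom : IsAtomCong Alg δ) (u₁ u₂ : A)
    (hδu : δ u₁ u₂) (hne : u₁ ≠ u₂) (c d : A) (hδcd : δ c d) (p : A → A)
    (hp : p c ≠ p d) :
    ∃ s, IsUnaryPolynomial Alg s ∧ δ (s u₁) c ∧ δ (s u₂) c ∧ p (s u₁) ≠ p (s u₂) := by
  obtain ⟨hδcong, hδne, hmin⟩ := hatom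
  have hcong := theta_cong Alg u₁ u₂
  have hsub : ∀ x y, Relation.EqvGen (MPair Alg u₁ u₂) x y → δ x y := by
    intro x y h
    induction h with
    | rel a b hab =>
        obtain ⟨s, hs, hc⟩ := hab
        rcases hc with ⟨h1, h2⟩ | ⟨h1, h2⟩
        · rw [← h1, ← h2]; exact unary_pres Alg hδcong hs hδu
        · rw [← h1, ← h2]; exact hδcong.1.symm (unary_pres Alg hδcong hs hδu)
    | refl a => exact hδcong.1.refl a
    | symm _ _ _ ih => exact hδcong.1.symm ih
    | trans _ _ _ _ _ ih1 ih2 => exact hδcong.1.trans ih1 ih2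
  have hθu : Relation.EqvGen (MPair Alg u₁ u₂) u₁ u₂ :=
    .rel _ _ ⟨fun z => z, unary_id Alg, Or.inl ⟨rfl, rfl⟩⟩
  have hθδ : Relation.EqvGen (MPair Alg u₁ u₂) = δ := by
    rcases hmin _ hcong hsub with h | h
    · exfalso; rw [h] at hθu; exact hne hθu
    · exact h
  have hθcd : Relation.EqvGen (MPair Alg u₁ u₂) c d := by rw [hθδ]; exact hδcd
  have key : ∀ x y, Relation.EqvGen (MPair Alg u₁ u₂) x y → p x = p y ∨
      ∃ s, IsUnaryPolynomial Alg s ∧ δ (s u₁) x ∧ δ (s u₂) x ∧ p (s u₁) ≠ p (s u₂) := by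
    intro x y h
    induction h with
    | rel a b hab =>
        by_cases hpe : p a = p b
        · exact Or.inl hpe
        · obtain ⟨s, hs, hc⟩ := hab
          rcases hc with ⟨h1, h2⟩ | ⟨h1, h2⟩
          · refine Or.inr ⟨s, hs, ?_, ?_, ?_⟩
            · rw [h1]; exact hδcong.1.refl a
            · rw [h2]; exact hδcong.1.symm (hsub a b (.rel _ _ ⟨s, hs, Or.inl ⟨h1, h2⟩⟩))
            · rw [h1, h2]; exact hpe
          · refine Or.inr ⟨s, hs, ?_, ?_, ?_⟩
            · rw [h1]; exact hδcong.1.symm (hsub a b (.rel _ _ ⟨s, hs, Or.inr ⟨h1, h2⟩⟩))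
            · rw [h2]; exact hδcong.1.refl a
            · rw [h1, h2]; exact Ne.symm hpe
    | refl a => exact Or.inl rfl
    | symm a b hab ih =>
        rcases ih with h | ⟨s, hs, h1, h2, h3⟩
        · exact Or.inl h.symm
        · exact Or.inr ⟨s, hs, hδcong.1.trans h1 (hsub a b hab),
            hδcong.1.trans h2 (hsub a b hab), h3⟩
    | trans a b e hab hbe ih1 ih2 =>
        rcases ih1 with h | ⟨s, hs, h1, h2, h3⟩
        · rcases ih2 with h' | ⟨s, hs, h1, h2, h3⟩
          · exact Or.inl (h.trans h')
          · exact Or.inr ⟨s, hs, hδcong.1.trans h1 (hδcong.1.symm (hsub a b hab)),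
              hδcong.1.trans h2 (hδcong.1.symm (hsub a b hab)), h3⟩
        · exact Or.inr ⟨s, hs, h1, h2, h3⟩
  rcases key c d hθcd with h | ⟨s, hs, h1, h2, h3⟩
  · exact absurd h hp
  · exact ⟨s, hs, h1, h2, h3⟩

theorem iterate_mem_of_mem {w : A → A} {V : Set A} (hwV : ∀ z, w z ∈ V) :
    ∀ (m : ℕ) (v : A), v ∈ V → w^[m] v ∈ V := by
  intro m
  induction m with
  | zero => intro v hv; simpa using hv
  | succ mm ih => intro v hv; rw [Function.iterate_succ_apply]; exact ih _ (hwV v)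

/-- Every non-collapsing unary polynomial with range inside the minimal set `U`
maps onto `U`. -/
theorem range_eq_U [Fintype A] {δ : A → A → Prop} (hatom : IsAtomCong Alg δ)
    {U : Set A} (hU : IsMinimalSet Alg δ U) {p : A → A}
    (hp : IsUnaryPolynomial Alg p) (hpU : ∀ x, p x ∈ U)
    (hnc : ∃ x y, δ x y ∧ p x ≠ p y) : ∀ u ∈ U, ∃ x, p x = u := by
  classical
  obtain ⟨⟨e, heidem, heU, a0, b0, hab0, hne0⟩, hminU⟩ := hU
  have hδcong := hatom.1
  set P : (A → A) → Prop := fun q => IsUnaryPolynomial Alg q ∧ (∀ x, q x ∈ U) ∧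
    ∃ x y, δ x y ∧ q x ≠ q y with hPdef
  have hPe : P e := ⟨heidem.1, fun x => by rw [heU]; exact ⟨x, rfl⟩, a0, b0, hab0, hne0⟩
  set S : Set ℕ := {n | ∃ q, P q ∧ (Set.range q).ncard = n} with hSdef
  have hSne : S.Nonempty := ⟨_, e, hPe, rfl⟩
  obtain ⟨g, hPg, hgcard⟩ := Nat.sInf_mem hSne
  have hmincard : ∀ q, P q → sInf S ≤ (Set.range q).ncard :=
    fun q hq => Nat.sInf_le ⟨q, hq, rfl⟩
  obtain ⟨hgpoly, hgU, x, y, hxy, hgxy⟩ := hPg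
  obtain ⟨s, hs, _, _, hsep⟩ := malcev Alg hatom (g x) (g y)
    (unary_pres Alg hδcong hgpoly hxy) hgxy x y hxy g hgxy
  set w : A → A := fun z => g (s z) with hw
  have hwpoly : IsUnaryPolynomial Alg w := unary_comp Alg hgpoly hs
  have hwV : ∀ z, w z ∈ Set.range g := fun z => ⟨s z, rfl⟩
  have hhP : P (fun z => w (g z)) :=
    ⟨unary_comp Alg hwpoly hgpoly, fun z => hgU _, x, y, hxy, hsep⟩
  have hhsub : Set.range (fun z => w (g z)) ⊆ Set.range g := by
    rintro _ ⟨z, rfl⟩; exact ⟨s (g z), rfl⟩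
  have hrange_eq : Set.range (fun z => w (g z)) = Set.range g :=
    Set.eq_of_subset_of_ncard_le hhsub (by rw [hgcard]; exact hmincard _ hhP)
      (Set.toFinite _)
  have hwsurj : ∀ v ∈ Set.range g, ∃ v' ∈ Set.range g, w v' = v := by
    intro v hv
    rw [← hrange_eq] at hv
    obtain ⟨z, hz⟩ := hv
    exact ⟨g z, ⟨z, rfl⟩, hz⟩
  set V := Set.range g with hVdef
  set wV : ↥V → ↥V := fun v => ⟨w v, hwV v⟩ with hwVdef
  have hwVsurj : Function.Surjective wV := by
    rintro ⟨v, hv⟩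
    obtain ⟨v', hv', he'⟩ := hwsurj v hv
    exact ⟨⟨v', hv'⟩, Subtype.ext he'⟩
  have hwVbij : Function.Bijective wV := ⟨Finite.injective_iff_surjective.2 hwVsurj, hwVsurj⟩
  set π : Equiv.Perm ↥V := Equiv.ofBijective wV hwVbij with hπdef
  have hiter : ∀ (m : ℕ) (v : ↥V), ((π ^ m) v : A) = w^[m] (v : A) := by
    intro m
    induction m with
    | zero => intro v; simp
    | succ mm ih =>
        intro v
        rw [pow_succ, Equiv.Perm.mul_apply, Function.iterate_succ_apply]
        have hπv : ((π v : ↥V) : A) = w (v : A) := rfl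
        rw [ih (π v), hπv]
  have hordpos : 0 < orderOf π := orderOf_pos π
  set n := orderOf π with hndef
  have hfix : ∀ v : ↥V, w^[n] (v : A) = v := by
    intro v
    rw [← hiter n v, pow_orderOf_eq_one]
    rfl
  set E := w^[n] with hEdef
  have hEpoly : IsUnaryPolynomial Alg E := unary_iterate Alg hwpoly n
  have hEV : ∀ z, E z ∈ V := by
    intro z
    have hn : n = (n - 1) + 1 := by omega
    rw [hEdef, hn, Function.iterate_succ_apply]
    exact iterate_mem_of_mem hwV _ _ (hwV z)
  have hVU : V ⊆ U := by rintro _ ⟨z, rfl⟩; exact hgU z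
  have hidem : ∀ z, E (E z) = E z := fun z => hfix ⟨E z, hEV z⟩
  have hEsub : Set.range E ⊆ U := by rintro _ ⟨z, rfl⟩; exact hVU (hEV z)
  have hEnc : ∃ a b, δ a b ∧ E a ≠ E b := by
    refine ⟨g x, g y, unary_pres Alg hδcong hgpoly hxy, ?_⟩
    rw [hfix ⟨g x, ⟨x, rfl⟩⟩, hfix ⟨g y, ⟨y, rfl⟩⟩]
    exact hgxy
  have hErange : Set.range E = U := hminU E ⟨hEpoly, hidem⟩ hEsub hEnc
  have hUV : U ⊆ V := by rw [← hErange]; rintro _ ⟨z, rfl⟩; exact hEV z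
  have hVeqU : V = U := le_antisymm hVU hUV
  have hPp : P p := ⟨hp, hpU, hnc⟩
  have hprange : Set.range p = U := by
    refine Set.eq_of_subset_of_ncard_le (by rintro _ ⟨z, rfl⟩; exact hpU z) ?_ (Set.toFinite _)
    calc U.ncard = V.ncard := by rw [hVeqU]
    _ = sInf S := hgcard
    _ ≤ (Set.range p).ncard := hmincard _ hPp
  intro u hu
  rw [← hprange] at hu
  exact hu

end AlgFix

end Aux

/-- On a finite carrier: if `B` maps everything into `U`, every point of `U` has a
`B`-preimage in `U`, and `B` maps `N ⊆ U` into `N`, then every point of `N` has a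
`B`-preimage in `N`. -/
theorem finite_inj_surj {A : Type} [Fintype A] (B : A → A) (U N : Set A)
    (hBU : ∀ z, B z ∈ U) (hNU : N ⊆ U) (hBN : ∀ x ∈ N, B x ∈ N)
    (hsurjU : ∀ u ∈ U, ∃ z ∈ U, B z = u) (t : A) (ht : t ∈ N) : ∃ x ∈ N, B x = t := by
  classical
  have hinjU : Set.InjOn B U := by
    intro x hx y hy hxy
    have hsurj : Function.Surjective (fun v : ↥U => (⟨B v, hBU v⟩ : ↥U)) := by
      rintro ⟨u, hu⟩
      obtain ⟨z, hz, hz2⟩ := hsurjU u hu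
      exact ⟨⟨z, hz⟩, Subtype.ext hz2⟩
    have hinj := Finite.injective_iff_surjective.2 hsurj
    have h5 : (⟨B x, hBU x⟩ : ↥U) = ⟨B y, hBU y⟩ := Subtype.ext hxy
    have h6 := hinj (show (fun v : ↥U => (⟨B v, hBU v⟩ : ↥U)) ⟨x, hx⟩
      = (fun v : ↥U => (⟨B v, hBU v⟩ : ↥U)) ⟨y, hy⟩ from h5)
    exact congrArg Subtype.val h6
  have hinjN : Function.Injective (fun v : ↥N => (⟨B v, hBN v v.2⟩ : ↥N)) := by
    intro v v' h
    exact Subtype.ext (hinjU (hNU v.2) (hNU v'.2) (congrArg Subtype.val h))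
  have hsurjN := Finite.injective_iff_surjective.1 hinjN
  obtain ⟨x, hx⟩ := hsurjN ⟨t, ht⟩
  exact ⟨x, x.2, congrArg Subtype.val hx⟩

/-- For a strongly abelian (type-1) atom δ with (⊥, δ)-minimal set U, any
polynomial mapping a product of δ-classes D₁ × ⋯ × D_k into U depends on at most one of
its variables. -/
theorem stmt_19 {σ : Signature} {A : Type} [Fintype A] (Alg : UAlg σ A)
    (δ : A → A → Prop) (hatom : IsAtomCong Alg δ)
    (hSA : StronglyAbelianOver Alg δ (fun a b => a = b))
    (U : Set A) (hU : IsMinimalSet Alg δ U)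
    (k : ℕ) (r : Fin k → A) (D : Fin k → Set A) (hD : ∀ i, D i = {x | δ x (r i)})
    (f : (Fin k → A) → A) (hf : IsPolynomial Alg f)
    (hfU : ∀ x : Fin k → A, (∀ i, x i ∈ D i) → f x ∈ U) :
    (∀ x y : Fin k → A, (∀ i, x i ∈ D i) → (∀ i, y i ∈ D i) → f x = f y) ∨
    ∃ j : Fin k, ∀ x y : Fin k → A, (∀ i, x i ∈ D i) → (∀ i, y i ∈ D i) →
      x j = y j → f x = f y := by
  classical
  have hδcong : IsCongruence Alg δ := hatom.1
  have hδrefl : ∀ x, δ x x := hδcong.1.refl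
  have hmem : ∀ (x : A) (i : Fin k), x ∈ D i ↔ δ x (r i) := by
    intro x i; rw [hD i]; exact Iff.rfl
  have hDδ : ∀ (i : Fin k) (x y : A), x ∈ D i → y ∈ D i → δ x y := by
    intro i x y hx hy
    exact hδcong.1.trans ((hmem x i).1 hx) (hδcong.1.symm ((hmem y i).1 hy))
  have hBoxupd : ∀ (w : Fin k → A), (∀ m, w m ∈ D m) → ∀ (l : Fin k) (z : A), z ∈ D l →
      ∀ m, Function.update w l z m ∈ D m := by
    intro w hw l z hz m
    by_cases hm : m = l
    · subst hm; rwa [Function.update_self]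
    · rw [Function.update_of_ne hm]; exact hw m
  have hupdδ : ∀ (g : Fin k → A) (l : Fin k) (z z' : A), δ z z' →
      ∀ m, δ (Function.update g l z m) (Function.update g l z' m) := by
    intro g l z z' hz m
    by_cases hm : m = l
    · subst hm; rw [Function.update_self, Function.update_self]; exact hz
    · rw [Function.update_of_ne hm, Function.update_of_ne hm]; exact hδrefl _
  -- the one-coordinate term condition, specialized to boxes
  have Pbox : ∀ (i : Fin k) (a b : A), a ∈ D i → b ∈ D i →
      ∀ u v w : Fin k → A, (∀ m, u m ∈ D m) → (∀ m, v m ∈ D m) → (∀ m, w m ∈ D m) →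
      f (Function.update u i a) = f (Function.update v i b) →
      f (Function.update w i a) = f (Function.update w i b) := by
    intro i a b ha hb u v w hu hv hw h
    refine Pone Alg hSA hf i a b (hDδ i a b ha hb) hδcong u v w
      (fun l => hDδ l _ _ (hu l) (hv l)) (fun l => hDδ l _ _ (hv l) (hw l)) h
  -- generic coordinate-swapping principle
  have swap_all : ∀ (x y : Fin k → A), (∀ m, x m ∈ D m) → (∀ m, y m ∈ D m) →
      (∀ (l : Fin k) (w : Fin k → A), (∀ m, w m ∈ D m) →
        f (Function.update w l (x l)) = f (Function.update w l (y l))) → f x = f y := by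
    intro x y hx hy hswap
    have main : ∀ S : Finset (Fin k), f x = f (fun l => if l ∈ S then y l else x l) := by
      intro S
      induction S using Finset.induction_on with
      | empty =>
          have hemp : (fun l => if l ∈ (∅ : Finset (Fin k)) then y l else x l) = x := by
            funext m; simp
          rw [hemp]
      | @insert l S hl ih =>
          have hmixbox : ∀ m, (if m ∈ S then y m else x m) ∈ D m := by
            intro m; by_cases h : m ∈ S <;> simp [h, hx m, hy m]
          have h1 : (fun m => if m ∈ insert l S then y m else x m)
              = Function.update (fun m => if m ∈ S then y m else x m) l (y l) := by
            funext m
            by_cases hm : m = l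
            · subst hm; simp
            · simp [Function.update_apply, hm]
          have h2 : (fun m => if m ∈ S then y m else x m)
              = Function.update (fun m => if m ∈ S then y m else x m) l (x l) := by
            funext m
            by_cases hm : m = l
            · subst hm; simp [hl]
            · simp [Function.update_apply, hm]
          rw [ih, h1]
          conv_lhs => rw [h2]
          exact hswap l _ hmixbox
    have hfin := main Finset.univ
    have hall : (fun l => if l ∈ (Finset.univ : Finset (Fin k)) then y l else x l) = y := by
      funext m; simp
    rwa [hall] at hfin
  by_cases hdep : ∃ jj : Fin k, ∃ a ∈ D jj, ∃ b ∈ D jj, ∃ w : Fin k → A,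
      (∀ m, w m ∈ D m) ∧ f (Function.update w jj a) ≠ f (Function.update w jj b)
  · obtain ⟨j, hDj⟩ := hdep
    by_cases hdep2 : ∃ ii : Fin k, ii ≠ j ∧ ∃ a ∈ D ii, ∃ b ∈ D ii, ∃ w : Fin k → A,
        (∀ m, w m ∈ D m) ∧ f (Function.update w ii a) ≠ f (Function.update w ii b)
    · -- two essential coordinates: contradiction
      exfalso
      obtain ⟨i, hij, a, ha, b, hb, w₀, hw₀, hab⟩ := hdep2
      obtain ⟨c, hc, d, hd, w₁, hw₁, hcd⟩ := hDj
      have Hab : ∀ u v : Fin k → A, (∀ m, u m ∈ D m) → (∀ m, v m ∈ D m) →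
          f (Function.update u i a) ≠ f (Function.update v i b) := by
        intro u v hu hv he
        exact hab (Pbox i a b ha hb u v w₀ hu hv hw₀ he)
      have Hcd : ∀ u v : Fin k → A, (∀ m, u m ∈ D m) → (∀ m, v m ∈ D m) →
          f (Function.update u j c) ≠ f (Function.update v j d) := by
        intro u v hu hv he
        exact hcd (Pbox j c d hc hd u v w₁ hu hv hw₁ he)
      have hrbox : ∀ m, r m ∈ D m := fun m => (hmem _ m).2 (hδrefl _)
      set ra := Function.update r i a with hra_def
      set rb := Function.update r i b with hrb_def
      have hra : ∀ m, ra m ∈ D m := hBoxupd r hrbox i a ha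
      have hrb : ∀ m, rb m ∈ D m := hBoxupd r hrbox i b hb
      set Aa : A → A := fun z => f (Function.update ra j z) with hAa_def
      set Ab : A → A := fun z => f (Function.update rb j z) with hAb_def
      have hAa_poly : IsUnaryPolynomial Alg Aa := unary_of_poly_update Alg hf ra j
      have fpres : ∀ x y : Fin k → A, (∀ l, δ (x l) (y l)) → δ (f x) (f y) :=
        fun x y h => poly_pres Alg hδcong hf h
      have hcomm : ∀ (z t : A), Function.update (Function.update r i t) j z
          = Function.update (Function.update r j z) i t :=
        fun z t => Function.update_comm hij t z r
      have hδcd : δ c d := hDδ j c d hc hd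
      have hAacd : Aa c ≠ Aa d := Hcd ra ra hra hra
      have hu₁U : Aa c ∈ U := hfU _ (hBoxupd ra hra j c hc)
      have hu₂U : Aa d ∈ U := hfU _ (hBoxupd ra hra j d hd)
      have hδu12 : δ (Aa c) (Aa d) := fpres _ _ (hupdδ ra j c d hδcd)
      obtain ⟨s, hs, hs1, hs2, hsep⟩ :=
        malcev Alg hatom (Aa c) (Aa d) hδu12 hAacd c d hδcd Aa hAacd
      have hsu₁D : s (Aa c) ∈ D j :=
        (hmem _ j).2 (hδcong.1.trans hs1 ((hmem c j).1 hc))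
      obtain ⟨e, heidem, heU, ea, eb, heab, hene⟩ := hU.1
      have hefix : ∀ u ∈ U, e u = u := by
        intro u hu
        rw [heU] at hu
        obtain ⟨z, rfl⟩ := hu
        exact heidem.2 z
      set B : A → A := fun z => e (Aa (s z)) with hB_def
      have hB_poly : IsUnaryPolynomial Alg B :=
        unary_comp Alg heidem.1 (unary_comp Alg hAa_poly hs)
      have hBU : ∀ z, B z ∈ U := by
        intro z; rw [heU]; exact ⟨_, rfl⟩
      have hBu₁ : B (Aa c) = Aa (s (Aa c)) :=
        hefix _ (hfU _ (hBoxupd ra hra j _ hsu₁D))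
      have hsu₂D : s (Aa d) ∈ D j :=
        (hmem _ j).2 (hδcong.1.trans hs2 ((hmem c j).1 hc))
      have hBu₂ : B (Aa d) = Aa (s (Aa d)) :=
        hefix _ (hfU _ (hBoxupd ra hra j _ hsu₂D))
      have hBnc : B (Aa c) ≠ B (Aa d) := by rw [hBu₁, hBu₂]; exact hsep
      -- B is onto U (with preimages in U)
      have hqsurj := range_eq_U Alg hatom hU (p := fun z => B (e z))
        (unary_comp Alg hB_poly heidem.1) (fun z => hBU _)
        ⟨Aa c, Aa d, hδu12, by
          show B (e (Aa c)) ≠ B (e (Aa d))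
          rw [hefix _ hu₁U, hefix _ hu₂U]; exact hBnc⟩
      have hsurjU : ∀ u ∈ U, ∃ z ∈ U, B z = u := by
        intro u hu
        obtain ⟨z, hz⟩ := hqsurj u hu
        exact ⟨e z, by rw [heU]; exact ⟨z, rfl⟩, hz⟩
      set N : Set A := {x | x ∈ U ∧ δ x (Aa c)} with hN_def
      have hδBu₁ : δ (B (Aa c)) (Aa c) := by
        rw [hBu₁]
        exact fpres _ _ (hupdδ ra j _ c hs1)
      have hBN : ∀ x, x ∈ N → B x ∈ N := by
        intro x hx
        refine ⟨hBU x, ?_⟩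
        have h1 : δ (B x) (B (Aa c)) := unary_pres Alg hδcong hB_poly hx.2
        exact hδcong.1.trans h1 hδBu₁

      have hAbcN : Ab c ∈ N := by
        refine ⟨hfU _ (hBoxupd rb hrb j c hc), ?_⟩
        refine fpres _ _ ?_
        intro m
        by_cases hm : m = j
        · subst hm; rw [Function.update_self, Function.update_self]; exact hδrefl _
        · rw [Function.update_of_ne hm, Function.update_of_ne hm]
          exact hupdδ r i b a (hDδ i b a hb ha) m
      obtain ⟨x, hxN, hBxval⟩ := finite_inj_surj B U N hBU (fun z hz => hz.1) hBN
        hsurjU (Ab c) hAbcN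
      have hsxD : s x ∈ D j := by
        refine (hmem _ j).2 (hδcong.1.trans ?_ ((hmem _ j).1 hsu₁D))
        exact unary_pres Alg hδcong hs hxN.2
      have hBxAa : B x = Aa (s x) := hefix _ (hfU _ (hBoxupd ra hra j _ hsxD))
      have hfinal : Aa (s x) = Ab c := hBxAa.symm.trans hBxval
      refine Hab (Function.update r j (s x)) (Function.update r j c)
        (hBoxupd r hrbox j _ hsxD) (hBoxupd r hrbox j c hc) ?_
      rw [← hcomm, ← hcomm]
      exact hfinal
    · -- only coordinate j is essential
      right
      refine ⟨j, ?_⟩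
      intro x y hx hy hxyj
      refine swap_all x y hx hy ?_
      intro l w hw
      by_cases hlj : l = j
      · subst hlj; rw [hxyj]
      · by_contra hne
        exact hdep2 ⟨l, hlj, x l, hx l, y l, hy l, w, hw, hne⟩
  · -- no essential coordinate: f is constant on the box
    left
    intro x y hx hy
    refine swap_all x y hx hy ?_
    intro l w hw
    by_contra hne
    exact hdep ⟨l, x l, hx l, y l, hy l, w, hw, hne⟩
end
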